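/- Weak union for linear independencies: for a positive definite matrix Σ partitioned by disjoint sets a, b, c, d, if Π_{a|bc.d} = 0 then Π_{a|b.cd} = 0. -/

import Mathlib

open Matrix

variable {n : ℕ}

/-- The submatrix (block) of `S` with rows `x` and columns `y`. -/
def blk (S : Matrix (Fin n) (Fin n) ℝ) (x y : Finset (Fin n)) : Matrix x y ℝ :=
  Matrix.of fun i j => S i j

/-- The conditional covariance block `Σ_{xy|z} = Σ_{xy} − Σ_{xz} Σ_{zz}⁻¹ Σ_{zy}`. -/
noncomputable def condCov (S : Matrix (Fin n) (Fin n) ℝ) (x y z : Finset (Fin n)) :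
    Matrix x y ℝ :=
  blk S x y - blk S x z * (blk S z z)⁻¹ * blk S z y

/-- The partial regression coefficient matrix `Π_{x|y.z} = Σ_{xy|z} Σ_{yy|z}⁻¹`. -/
noncomputable def regCoef (S : Matrix (Fin n) (Fin n) ℝ) (x y z : Finset (Fin n)) :
    Matrix x y ℝ :=
  condCov S x y z * (condCov S y y z)⁻¹

section Aux

/-- A principal submatrix (along an injective map) of a positive definite matrix
is positive definite. -/
lemma posDef_submatrix_of_injective {m k : Type*} [Fintype m] [Fintype k]
    {M : Matrix k k ℝ} (hM : M.PosDef) {e : m → k} (he : Function.Injective e) :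
    (M.submatrix e e).PosDef := by
  classical
  refine PosDef.of_dotProduct_mulVec_pos (hM.1.submatrix e) fun x hx => ?_
  set y : k → ℝ := Function.extend e x 0 with hy
  have hye : ∀ i, y (e i) = x i := fun i => he.extend_apply x 0 i
  have hy0 : ∀ j, j ∉ Set.range e → y j = 0 := by
    intro j hj
    rw [hy]
    exact Function.extend_apply' x (0 : k → ℝ) j (by simpa [Set.range] using hj)
  have hsum : ∀ v : k → ℝ, ∑ j, y j * v j = ∑ i, x i * v (e i) := by
    intro v
    have h1 : ∑ j ∈ Finset.univ.image e, y j * v j = ∑ i, x i * v (e i) := by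
      rw [Finset.sum_image (fun a _ b _ h => he h)]
      simp [hye]
    rw [← h1]
    refine (Finset.sum_subset (Finset.subset_univ _) ?_).symm
    intro j _ hj
    have hjr : j ∉ Set.range e := by
      rintro ⟨i, rfl⟩; exact hj (Finset.mem_image_of_mem e (Finset.mem_univ i))
    rw [hy0 j hjr, zero_mul]
  have hq : star x ⬝ᵥ (M.submatrix e e *ᵥ x) = star y ⬝ᵥ (M *ᵥ y) := by
    simp only [dotProduct, mulVec, Pi.star_apply, star_trivial, submatrix_apply]
    rw [hsum (fun j => ∑ kk, M j kk * y kk)]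
    refine Finset.sum_congr rfl fun i _ => ?_
    congr 1
    have := hsum (fun kk => M (e i) kk)
    calc ∑ i', M (e i) (e i') * x i' = ∑ i', x i' * M (e i) (e i') := by
          simp [mul_comm]
      _ = ∑ kk, y kk * M (e i) kk := (hsum _).symm
      _ = ∑ kk, M (e i) kk * y kk := by simp [mul_comm]
  have hy0' : y ≠ 0 := by
    obtain ⟨i, hi⟩ := Function.ne_iff.1 hx
    intro h0
    exact hi (by simpa [hye i] using congrFun h0 (e i))
  rw [hq]
  exact hM.dotProduct_mulVec_pos hy0'

/-- The Schur complement of a positive definite block matrix is positive definite. -/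
lemma schur_posDef {m k : Type*} [Fintype m] [Fintype k] [DecidableEq k]
    {A : Matrix m m ℝ} {B : Matrix m k ℝ} {D : Matrix k k ℝ}
    (h : (fromBlocks A B Bᴴ D).PosDef) (hD : D.PosDef) :
    (A - B * D⁻¹ * Bᴴ).PosDef := by
  haveI : Invertible D := D.invertibleOfIsUnitDet (isUnit_iff_ne_zero.2 hD.det_pos.ne')
  refine PosDef.of_dotProduct_mulVec_pos ((IsHermitian.fromBlocks₂₂ A B hD.1).1 h.1) fun x hx => ?_
  have hv0 : (Sum.elim x (-((D⁻¹ * Bᴴ) *ᵥ x)) : m ⊕ k → ℝ) ≠ 0 := by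
    intro h0
    exact hx (funext fun i => congrFun h0 (Sum.inl i))
  have hpos := h.dotProduct_mulVec_pos hv0
  rw [dotProduct_mulVec, schur_complement_eq₂₂ A B x (-((D⁻¹ * Bᴴ) *ᵥ x)) hD.1] at hpos
  simp only [add_neg_cancel, star_zero, zero_vecMul, zero_dotProduct, zero_add] at hpos
  rw [dotProduct_mulVec]
  exact hpos

/-- The equivalence between `↥c ⊕ ↥d` and `↥(c ∪ d)` for disjoint finsets. -/
def unionSumEquiv (c d : Finset (Fin n)) (hcd : Disjoint c d) :
    (↥c ⊕ ↥d) ≃ ↥(c ∪ d) where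
  toFun := Sum.elim (fun i => ⟨i, Finset.mem_union_left d i.2⟩)
    (fun i => ⟨i, Finset.mem_union_right c i.2⟩)
  invFun i := if h : (i : Fin n) ∈ c then Sum.inl ⟨i, h⟩
    else Sum.inr ⟨i, (Finset.mem_union.1 i.2).resolve_left h⟩
  left_inv := by
    rintro (⟨i, hi⟩ | ⟨i, hi⟩)
    · simp [hi]
    · simp [Finset.disjoint_right.1 hcd hi]
  right_inv := by
    rintro ⟨i, hi⟩
    by_cases h : i ∈ c <;> simp [h]

lemma sumElim_val_injective {c d : Finset (Fin n)} (hcd : Disjoint c d) :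
    Function.Injective (Sum.elim (Subtype.val : c → Fin n) (Subtype.val : d → Fin n)) := by
  rintro (s | s) (t | t) h <;> simp only [Sum.elim_inl, Sum.elim_inr] at h
  · exact congrArg Sum.inl (Subtype.ext h)
  · exact absurd (h ▸ s.2) (Finset.disjoint_right.1 hcd t.2)
  · exact absurd (h ▸ s.2) (Finset.disjoint_left.1 hcd t.2)
  · exact congrArg Sum.inr (Subtype.ext h)

lemma blk_conjTranspose (S : Matrix (Fin n) (Fin n) ℝ) (hS : S.IsHermitian)
    (x y : Finset (Fin n)) : (blk S x y)ᴴ = blk S y x := by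
  ext i j
  have : Sᴴ (↑i : Fin n) (↑j : Fin n) = S ↑i ↑j := by rw [hS.eq]
  simpa [blk, conjTranspose_apply] using this

lemma fromBlocks_blk (S : Matrix (Fin n) (Fin n) ℝ) (c d : Finset (Fin n)) :
    S.submatrix (Sum.elim (Subtype.val : c → Fin n) (Subtype.val : d → Fin n))
        (Sum.elim (Subtype.val : c → Fin n) (Subtype.val : d → Fin n)) =
      fromBlocks (blk S c c) (blk S c d) (blk S d c) (blk S d d) := by
  ext (i | i) (j | j) <;> rfl

/-- `Σ_{cc|d}` is positive definite for disjoint `c d` when `S` is. -/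
lemma condCov_posDef (S : Matrix (Fin n) (Fin n) ℝ) (hS : S.PosDef)
    (c d : Finset (Fin n)) (hcd : Disjoint c d) : (condCov S c c d).PosDef := by
  have hMps := posDef_submatrix_of_injective hS (sumElim_val_injective hcd)
  rw [fromBlocks_blk] at hMps
  have hDd : (blk S d d).PosDef :=
    posDef_submatrix_of_injective hS (Subtype.val_injective (p := fun i => i ∈ d))
  have hBH : (blk S c d)ᴴ = blk S d c := blk_conjTranspose S hS.1 c d
  have h1 : (fromBlocks (blk S c c) (blk S c d) (blk S c d)ᴴ (blk S d d)).PosDef := by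
    rw [hBH]; exact hMps
  have h2 := schur_posDef h1 hDd
  rw [hBH] at h2
  exact h2

/-- Invertibility from positive definiteness. -/
noncomputable def invertibleOfPosDef {k : Type*} [Fintype k] [DecidableEq k]
    {M : Matrix k k ℝ} (hM : M.PosDef) : Invertible M :=
  M.invertibleOfIsUnitDet (isUnit_iff_ne_zero.2 hM.det_pos.ne')

/-- The quotient rule for conditional covariances. -/
lemma condCov_union (S : Matrix (Fin n) (Fin n) ℝ) (hS : S.PosDef)
    (x y c d : Finset (Fin n)) (hcd : Disjoint c d) :
    condCov S x y (c ∪ d) =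
      condCov S x y d - condCov S x c d * (condCov S c c d)⁻¹ * condCov S c y d := by
  classical
  set e := unionSumEquiv c d hcd with he
  set f : (↥c ⊕ ↥d) → Fin n := Sum.elim Subtype.val Subtype.val with hf
  have hfe : ∀ s, f s = ((e s : Fin n)) := by rintro (s | s) <;> rfl
  have hDd : (blk S d d).PosDef :=
    posDef_submatrix_of_injective hS (Subtype.val_injective (p := fun i => i ∈ d))
  have hH : (condCov S c c d).PosDef := condCov_posDef S hS c d hcd
  haveI iD : Invertible (blk S d d) := invertibleOfPosDef hDd
  haveI iH : Invertible (condCov S c c d) := invertibleOfPosDef hH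
  haveI iH' : Invertible (blk S c c - blk S c d * ⅟(blk S d d) * blk S d c) := by
    rw [invOf_eq_nonsing_inv]; exact iH
  haveI iM : Invertible (fromBlocks (blk S c c) (blk S c d) (blk S d c) (blk S d d)) :=
    fromBlocks₂₂Invertible _ _ _ _
  have hXd : blk S x (c ∪ d) =
      (S.submatrix (Subtype.val : x → Fin n) f).submatrix id e.symm := by
    ext i j
    show S ↑i ↑j = S ↑i (f (e.symm j))
    rw [hfe, e.apply_symm_apply]
  have hYd : blk S (c ∪ d) y =
      (S.submatrix f (Subtype.val : y → Fin n)).submatrix e.symm id := by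
    ext i j
    show S ↑i ↑j = S (f (e.symm i)) ↑j
    rw [hfe, e.apply_symm_apply]
  have hZ : blk S (c ∪ d) (c ∪ d) = (S.submatrix f f).submatrix e.symm e.symm := by
    ext i j
    show S ↑i ↑j = S (f (e.symm i)) (f (e.symm j))
    rw [hfe, hfe, e.apply_symm_apply, e.apply_symm_apply]
  have key : blk S x (c ∪ d) * (blk S (c ∪ d) (c ∪ d))⁻¹ * blk S (c ∪ d) y =
      S.submatrix (Subtype.val : x → Fin n) f * (S.submatrix f f)⁻¹ *
        S.submatrix f (Subtype.val : y → Fin n) := by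
    rw [hXd, hYd, hZ, inv_submatrix_equiv, submatrix_mul_equiv, submatrix_mul_equiv,
      submatrix_id_id]
  have hXc : S.submatrix (Subtype.val : x → Fin n) f =
      fromCols (blk S x c) (blk S x d) := by
    ext i (j | j) <;> rfl
  have hYr : S.submatrix f (Subtype.val : y → Fin n) =
      fromRows (blk S c y) (blk S d y) := by
    ext (i | i) j <;> rfl
  have hff : S.submatrix f f = fromBlocks (blk S c c) (blk S c d) (blk S d c) (blk S d d) :=
    fromBlocks_blk S c d
  have hinvM : (fromBlocks (blk S c c) (blk S c d) (blk S d c) (blk S d d))⁻¹ =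
      fromBlocks (condCov S c c d)⁻¹
        (-((condCov S c c d)⁻¹ * (blk S c d * (blk S d d)⁻¹)))
        (-((blk S d d)⁻¹ * blk S d c * (condCov S c c d)⁻¹))
        ((blk S d d)⁻¹ + (blk S d d)⁻¹ * blk S d c * (condCov S c c d)⁻¹ *
          (blk S c d * (blk S d d)⁻¹)) := by
    rw [← invOf_eq_nonsing_inv, invOf_fromBlocks₂₂_eq]
    simp only [invOf_eq_nonsing_inv, condCov, Matrix.mul_assoc]
  simp only [condCov]
  rw [key, hXc, hYr, hff, hinvM, fromCols_mul_fromBlocks, fromCols_mul_fromRows]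
  simp only [condCov, Matrix.mul_sub, Matrix.sub_mul, Matrix.mul_add, Matrix.add_mul,
    Matrix.mul_neg, Matrix.neg_mul, Matrix.mul_assoc]
  abel

lemma condCov_apply_union_left (S : Matrix (Fin n) (Fin n) ℝ)
    (x b c d : Finset (Fin n)) (i : x) (j : b) :
    condCov S x b d i j = condCov S x (b ∪ c) d i ⟨(j : Fin n), Finset.mem_union_left c j.2⟩ := by
  simp [condCov, Matrix.sub_apply, Matrix.mul_apply, blk]

lemma condCov_apply_union_right (S : Matrix (Fin n) (Fin n) ℝ)
    (x b c d : Finset (Fin n)) (i : x) (j : c) :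
    condCov S x c d i j = condCov S x (b ∪ c) d i ⟨(j : Fin n), Finset.mem_union_right b j.2⟩ := by
  simp [condCov, Matrix.sub_apply, Matrix.mul_apply, blk]

end Aux

/-- weak union, `Π_{a|bc.d} = 0` implies `Π_{a|b.cd} = 0`. -/
theorem regCoef_weakUnion (S : Matrix (Fin n) (Fin n) ℝ) (hS : S.PosDef)
    (a b c d : Finset (Fin n))
    (hab : Disjoint a b) (hac : Disjoint a c) (had : Disjoint a d)
    (hbc : Disjoint b c) (hbd : Disjoint b d) (hcd : Disjoint c d)
    (h : regCoef S a (b ∪ c) d = 0) :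
    regCoef S a b (c ∪ d) = 0 := by
  classical
  have hbc_d : Disjoint (b ∪ c) d := Finset.disjoint_union_left.2 ⟨hbd, hcd⟩
  have hP : (condCov S (b ∪ c) (b ∪ c) d).PosDef := condCov_posDef S hS _ _ hbc_d
  have h0 : condCov S a (b ∪ c) d = 0 := by
    have h1 := congrArg (· * condCov S (b ∪ c) (b ∪ c) d) h
    simpa [regCoef, Matrix.mul_assoc,
      Matrix.nonsing_inv_mul _ (isUnit_iff_ne_zero.2 hP.det_pos.ne')] using h1
  have hab0 : condCov S a b d = 0 := by
    ext i j
    rw [condCov_apply_union_left S a b c d i j, h0]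
    simp
  have hac0 : condCov S a c d = 0 := by
    ext i j
    rw [condCov_apply_union_right S a b c d i j, h0]
    simp
  rw [regCoef, condCov_union S hS a b c d hcd, hab0, hac0]
  simp
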